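/- Let x₁, y₁, x₂, y₂, c ∈ ℝ and ξ ∈ ℂ with ξξ̄ ≠ 1. Put u₁ = x₁ + iy₁ and u₂ = x₂ + iy₂, and define z₁ = u₁ − ξū₂, z₂ = u₂ − ξū₁, and w = ic − (1/2)u₂ū₂ − (1/2)u₁ū₁ + ξū₁ū₂. Then Re(w) = −(z₁z̄₁ + z₂z̄₂ + 2·Re(z₁z₂ξ̄))/(2 − 2ξξ̄). -/

import Mathlib

open ComplexConjugate in
theorem su22_model_defining_equation
    (x₁ y₁ x₂ y₂ c : ℝ) (ξ : ℂ) (hξ : ξ * conj ξ ≠ 1)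
    (u₁ u₂ z₁ z₂ w : ℂ)
    (hu₁ : u₁ = (x₁ : ℂ) + Complex.I * (y₁ : ℂ))
    (hu₂ : u₂ = (x₂ : ℂ) + Complex.I * (y₂ : ℂ))
    (hz₁ : z₁ = u₁ - ξ * conj u₂)
    (hz₂ : z₂ = u₂ - ξ * conj u₁)
    (hw : w = Complex.I * (c : ℂ) - (1/2) * u₂ * conj u₂ - (1/2) * u₁ * conj u₁
        + ξ * conj u₁ * conj u₂) :
    (w.re : ℂ) = -(z₁ * conj z₁ + z₂ * conj z₂
        + 2 * Complex.ofReal (z₁ * z₂ * conj ξ).re) / (2 - 2 * ξ * conj ξ) := by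
  have hre : ∀ a : ℂ, (a.re : ℂ) = (a + conj a) / 2 := by
    intro a; rw [Complex.add_conj]; push_cast; ring
  have h2 : (2 : ℂ) - 2 * ξ * conj ξ ≠ 0 := by
    intro h
    apply hξ
    have : (2 : ℂ) * (ξ * conj ξ) = 2 * 1 := by linear_combination -h
    exact mul_left_cancel₀ (two_ne_zero) this
  rw [hre w, hre (z₁ * z₂ * conj ξ)]
  subst hz₁ hz₂ hw hu₁ hu₂
  simp only [map_add, map_mul, map_sub, map_neg, map_div₀, map_one, map_ofNat,
    Complex.conj_conj, Complex.conj_ofReal, Complex.conj_I]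
  field_simp
  ring
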